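/- For every c ≥ 0, (1/2)·erfc(c/√2) > (1/√π) · exp(−c²/2) / (√(c²/2) + √(c²/2 + 2)). -/

import Mathlib

open Real

open Real MeasureTheory Filter Set

private lemma sqrt_lt_self_add (s : ℝ) : |s| < Real.sqrt (s^2 + 2) := by
  have : Real.sqrt (s^2) < Real.sqrt (s^2+2) :=
    Real.sqrt_lt_sqrt (by positivity) (by linarith)
  simpa [Real.sqrt_sq_eq_abs] using this

private lemma su_pos (s : ℝ) : 0 < s + Real.sqrt (s^2+2) := by
  have h := sqrt_lt_self_add s
  have := neg_abs_le s
  linarith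

lemma key (x : ℝ) (hx : 0 ≤ x) :
    Real.exp (-x^2) / (x + Real.sqrt (x^2+2)) < ∫ s in Set.Ioi x, Real.exp (-s^2) := by
  set u : ℝ → ℝ := fun s => Real.sqrt (s^2+2) with hu
  set F : ℝ → ℝ := fun s => Real.exp (-s^2) / (s + u s) with hF
  set d : ℝ → ℝ := fun s => Real.exp (-s^2) * (1 - s / u s) / (s + u s)^2 with hd
  have hupos : ∀ s, 0 < u s := fun s => Real.sqrt_pos.2 (by positivity)
  have hsu : ∀ s, 0 < s + u s := su_pos
  have hu2 : ∀ s, (u s)^2 = s^2 + 2 := fun s => Real.sq_sqrt (by positivity)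
  have hslt : ∀ s, s < u s := fun s => lt_of_le_of_lt (le_abs_self s) (sqrt_lt_self_add s)
  have hucont : Continuous u := by
    exact Real.continuous_sqrt.comp ((continuous_pow 2).add continuous_const)
  -- derivative of F
  have hderiv : ∀ s, HasDerivAt F (d s - Real.exp (-s^2)) s := by
    intro s
    have h1 : HasDerivAt (fun s : ℝ => Real.exp (-s^2)) (-(2*s) * Real.exp (-s^2)) s := by
      have := (Real.hasDerivAt_exp (-s^2)).comp s (((hasDerivAt_pow 2 s)).neg)
      refine this.congr_deriv ?_
      push_cast
      ring
    have h2 : HasDerivAt u (1 / (2 * u s) * (2*s)) s := by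
      have hne : s^2 + 2 ≠ 0 := by positivity
      have := (Real.hasDerivAt_sqrt hne).comp s (((hasDerivAt_pow 2 s)).add_const 2)
      refine this.congr_deriv ?_
      simp [hu]
    have h3 : HasDerivAt (fun s => s + u s) (1 + 1 / (2 * u s) * (2*s)) s :=
      (hasDerivAt_id s).add h2
    have h4 := h1.div h3 (ne_of_gt (hsu s))
    refine h4.congr_deriv (Eq.symm ?_)
    have hune : u s ≠ 0 := ne_of_gt (hupos s)
    have hsune : s + u s ≠ 0 := ne_of_gt (hsu s)
    have hq := hu2 s
    show Real.exp (-s^2) * (1 - s / u s) / (s + u s)^2 - Real.exp (-s^2) = _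
    field_simp
    linear_combination (-(u s)) * hq
  have hFcont : Continuous F :=
    continuous_iff_continuousAt.2 fun s => (hderiv s).continuousAt
  -- d is positive and small
  have hd_pos : ∀ s, 0 < d s := by
    intro s
    have h1 : 0 < 1 - s / u s := by
      have : s / u s < 1 := (div_lt_one (hupos s)).2 (hslt s)
      linarith
    exact div_pos (mul_pos (Real.exp_pos _) h1) (pow_pos (hsu s) 2)
  have hd_le : ∀ s, 0 ≤ s → d s ≤ Real.exp (-s^2) := by
    intro s hs
    have h1 : 1 - s / u s ≤ 1 := by
      have : 0 ≤ s / u s := div_nonneg hs (hupos s).le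
      linarith
    have h2 : (1:ℝ) ≤ (s + u s)^2 := by
      nlinarith [hu2 s, hsu s, hupos s]
    calc d s = Real.exp (-s^2) * (1 - s / u s) / (s + u s)^2 := rfl
      _ ≤ Real.exp (-s^2) * 1 / 1 := by
          apply div_le_div₀ (by positivity) _ one_pos h2
          exact mul_le_mul_of_nonneg_left h1 (Real.exp_pos _).le
      _ = Real.exp (-s^2) := by ring
  -- integrability
  have hexp_int : IntegrableOn (fun s => Real.exp (-s^2)) (Set.Ioi x) := by
    have := integrable_exp_neg_mul_sq (b := 1) one_pos
    simpa using this.integrableOn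
  have hd_cont : Continuous d := by
    apply Continuous.div
    · exact ((Real.continuous_exp.comp (continuous_pow 2).neg).mul
        (continuous_const.sub (continuous_id.div hucont fun s => ne_of_gt (hupos s))))
    · exact (continuous_id.add hucont).pow 2
    · exact fun s => pow_ne_zero _ (ne_of_gt (hsu s))
  have hd_int : IntegrableOn d (Set.Ioi x) := by
    apply Integrable.mono' hexp_int hd_cont.aestronglyMeasurable
    filter_upwards [ae_restrict_mem measurableSet_Ioi] with s hs
    rw [Real.norm_eq_abs, abs_of_pos (hd_pos s)]
    exact hd_le s (le_of_lt (lt_of_le_of_lt hx hs))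
  have hF'_int : IntegrableOn (fun s => d s - Real.exp (-s^2)) (Set.Ioi x) :=
    hd_int.sub hexp_int
  -- tendsto
  have htend : Tendsto F atTop (nhds 0) := by
    have h1 : Tendsto (fun s : ℝ => Real.exp (-s^2)) atTop (nhds 0) := by
      apply Real.tendsto_exp_atBot.comp
      apply tendsto_neg_atBot_iff.2
      exact tendsto_pow_atTop (by norm_num)
    have h2 : Tendsto (fun s : ℝ => (s + u s)⁻¹) atTop (nhds 0) := by
      apply tendsto_inv_atTop_zero.comp
      apply tendsto_atTop_mono (fun s => ?_) tendsto_id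
      have := (hupos s).le
      simp only [id]
      linarith
    have := h1.mul h2
    simpa [hF, div_eq_mul_inv] using this
  have hFTC : ∫ s in Set.Ioi x, (d s - Real.exp (-s^2)) = 0 - F x :=
    integral_Ioi_of_hasDerivAt_of_tendsto (hFcont.continuousWithinAt)
      (fun s _ => hderiv s) hF'_int htend
  rw [integral_sub hd_int hexp_int] at hFTC
  have hdint_pos : 0 < ∫ s in Set.Ioi x, d s := by
    rw [setIntegral_pos_iff_support_of_nonneg_ae
      (Eventually.of_forall fun s => (hd_pos s).le) hd_int]
    have hsupp : Function.support d ∩ Set.Ioi x = Set.Ioi x := by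
      apply inter_eq_right.2
      intro s _
      exact ne_of_gt (hd_pos s)
    rw [hsupp, Real.volume_Ioi]
    exact ENNReal.zero_lt_top
  have hFx : F x = Real.exp (-x^2) / (x + Real.sqrt (x^2+2)) := rfl
  linarith

/-- The complementary error function erfc(t) = (2/√π) ∫_t^∞ e^{−s²} ds. -/
noncomputable def erfc (t : ℝ) : ℝ :=
  (2 / Real.sqrt π) * ∫ s in Set.Ioi t, Real.exp (-s ^ 2)

/-- the Abramowitz–Stegun lower bound for erfc at c/√2. -/
theorem stmt3 (c : ℝ) (hc : 0 ≤ c) :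
    (1 / 2) * erfc (c / Real.sqrt 2) >
      (1 / Real.sqrt π) * Real.exp (-c ^ 2 / 2) /
        (Real.sqrt (c ^ 2 / 2) + Real.sqrt (c ^ 2 / 2 + 2)) := by
  have h2 : (0:ℝ) < Real.sqrt 2 := Real.sqrt_pos.2 (by norm_num)
  set x := c / Real.sqrt 2 with hxdef
  have hx : 0 ≤ x := div_nonneg hc h2.le
  have hx2 : x ^ 2 = c ^ 2 / 2 := by
    rw [hxdef, div_pow, Real.sq_sqrt (by norm_num : (0:ℝ) ≤ 2)]
  have hsq : Real.sqrt (c ^ 2 / 2) = x := by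
    rw [← hx2, Real.sqrt_sq hx]
  have hπ : (0:ℝ) < Real.sqrt π := Real.sqrt_pos.2 Real.pi_pos
  have hkey := key x hx
  rw [hsq, ← hx2, show -c^2/2 = -x^2 by rw [hx2]; ring]
  unfold erfc
  rw [mul_div_assoc]
  show (1 / Real.sqrt π) * (Real.exp (-x ^ 2) / (x + Real.sqrt (x ^ 2 + 2))) <
      1 / 2 * (2 / Real.sqrt π * ∫ s in Set.Ioi x, Real.exp (-s ^ 2))
  calc (1 / Real.sqrt π) * (Real.exp (-x ^ 2) / (x + Real.sqrt (x ^ 2 + 2)))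
      < (1 / Real.sqrt π) * ∫ s in Set.Ioi x, Real.exp (-s ^ 2) := by
        apply mul_lt_mul_of_pos_left _ (by positivity)
        exact hkey
    _ = 1 / 2 * (2 / Real.sqrt π * ∫ s in Set.Ioi x, Real.exp (-s ^ 2)) := by ring
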